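/- A hyponormal operator annihilated by a nonzero polynomial is normal: if T is a bounded operator with T*T − TT* ≥ 0 and p(T) = 0 for some nonzero p ∈ ℂ[z], then T*T = TT*. -/

import Mathlib

noncomputable section

open Polynomial ContinuousLinearMap RCLike

namespace Stmt17Aux

variable {H : Type*} [NormedAddCommGroup H] [InnerProductSpace ℂ H] [CompleteSpace H]

local notation "⟪" x ", " y "⟫" => @inner ℂ _ _ x y

/-- A shift of a hyponormal operator is hyponormal. -/
lemma shift_hypo (T : H →L[ℂ] H)
    (hhypo : ∀ x : H, ‖(adjoint T) x‖ ≤ ‖T x‖) (lam : ℂ) (x : H) :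
    ‖(adjoint (T - lam • 1)) x‖ ≤ ‖(T - lam • 1) x‖ := by
  have hadj : adjoint (T - lam • 1) = adjoint T - (starRingEnd ℂ lam) • 1 := by
    rw [map_sub, map_smulₛₗ]
    congr 1
    rw [ContinuousLinearMap.one_def, adjoint_id]
  have h1 : ‖(T - lam • 1) x‖ ^ 2 = ‖T x‖ ^ 2
      - 2 * re (⟪T x, lam • x⟫) + ‖lam • x‖ ^ 2 := by
    have := @norm_sub_sq ℂ H _ _ _ (T x) (lam • x)
    rw [ContinuousLinearMap.sub_apply, ContinuousLinearMap.smul_apply, ContinuousLinearMap.one_apply]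
    exact this
  have h2 : ‖(adjoint (T - lam • 1)) x‖ ^ 2 = ‖adjoint T x‖ ^ 2
      - 2 * re (⟪adjoint T x, (starRingEnd ℂ lam) • x⟫) + ‖lam • x‖ ^ 2 := by
    rw [hadj]
    have := @norm_sub_sq ℂ H _ _ _ (adjoint T x) ((starRingEnd ℂ lam) • x)
    rw [ContinuousLinearMap.sub_apply, ContinuousLinearMap.smul_apply, ContinuousLinearMap.one_apply,
      this, norm_smul, norm_smul, RCLike.norm_conj]
  have h3 : re (⟪adjoint T x, (starRingEnd ℂ lam) • x⟫) = re (⟪T x, lam • x⟫) := by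
    have heq : ⟪adjoint T x, (starRingEnd ℂ lam) • x⟫ = starRingEnd ℂ (⟪T x, lam • x⟫) := by
      rw [inner_smul_right, inner_smul_right, adjoint_inner_left, map_mul, inner_conj_symm]
    rw [heq]
    exact RCLike.conj_re _
  have key : ‖(adjoint (T - lam • 1)) x‖ ^ 2 ≤ ‖(T - lam • 1) x‖ ^ 2 := by
    rw [h1, h2, h3]
    have := hhypo x
    nlinarith [norm_nonneg (T x), norm_nonneg (adjoint T x)]
  nlinarith [norm_nonneg ((adjoint (T - lam • 1)) x), norm_nonneg ((T - lam • 1) x)]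

/-- For hyponormal S, S (S x) = 0 implies S x = 0. -/
lemma sq_ker (S : H →L[ℂ] H) (hS : ∀ x : H, ‖(adjoint S) x‖ ≤ ‖S x‖) (x : H)
    (h : S (S x) = 0) : S x = 0 := by
  have h1 : adjoint S (S x) = 0 := by
    have := hS (S x)
    rw [h] at this
    simpa using norm_le_zero_iff.mp (by simpa using this)
  have h2 : ⟪S x, S x⟫ = 0 := by
    have : ⟪S x, S x⟫ = ⟪x, adjoint S (S x)⟫ := (adjoint_inner_right S x (S x)).symm
    rw [this, h1, inner_zero_right]
  exact inner_self_eq_zero.mp h2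

/-- For hyponormal S, S^n x = 0 implies S x = 0. -/
lemma pow_ker (S : H →L[ℂ] H) (hS : ∀ x : H, ‖(adjoint S) x‖ ≤ ‖S x‖) :
    ∀ n : ℕ, ∀ x : H, (S ^ n) x = 0 → S x = 0 := by
  intro n
  induction n with
  | zero => intro x hx; simp at hx; simp [hx]
  | succ n ih =>
    intro x hx
    match n, ih with
    | 0, _ => simpa using hx
    | (m+1), ih =>
      apply ih
      have hpow : S ^ (m + 1 + 1) = S * S * S ^ m := by
        rw [show m + 1 + 1 = 2 + m by ring, pow_add, pow_two]
      have hx' : S (S ((S ^ m) x)) = 0 := by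
        rw [hpow] at hx
        simpa [mul_apply] using hx
      have h2 := sq_ker S hS ((S ^ m) x) hx'
      have : S ^ (m + 1) = S * S ^ m := by rw [pow_succ']
      rw [this]
      simpa [mul_apply] using h2

/-- Eigenvector of hyponormal T is eigenvector of adjoint. -/
lemma eig_adjoint (T : H →L[ℂ] H)
    (hhypo : ∀ x : H, ‖(adjoint T) x‖ ≤ ‖T x‖) (lam : ℂ) (x : H)
    (h : T x = lam • x) : adjoint T x = (starRingEnd ℂ lam) • x := by
  have h0 : (T - lam • 1) x = 0 := by simp [h]
  have h1 : ‖(adjoint (T - lam • 1)) x‖ ≤ 0 := by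
    have := shift_hypo T hhypo lam x
    rwa [h0, norm_zero] at this
  have h2 : (adjoint (T - lam • 1)) x = 0 := norm_le_zero_iff.mp h1
  have hadj : adjoint (T - lam • 1) = adjoint T - (starRingEnd ℂ lam) • 1 := by
    rw [map_sub, map_smulₛₗ]
    congr 1
    rw [ContinuousLinearMap.one_def, adjoint_id]
  rw [hadj] at h2
  simpa [sub_eq_zero] using h2

end Stmt17Aux

/-- A hyponormal operator annihilated by a nonzero polynomial is normal. -/
theorem stmt17 {H : Type*} [NormedAddCommGroup H] [InnerProductSpace ℂ H] [CompleteSpace H]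
    (T : H →L[ℂ] H)
    (hhypo : ∀ x : H, ‖(ContinuousLinearMap.adjoint T) x‖ ≤ ‖T x‖)
    (p : Polynomial ℂ) (hp : p ≠ 0) (hann : Polynomial.aeval T p = 0) :
    (ContinuousLinearMap.adjoint T) * T = T * (ContinuousLinearMap.adjoint T) := by
  rcases subsingleton_or_nontrivial H with hsub | hnt
  · ext x; exact Subsingleton.elim _ _
  classical
  set N := p.natDegree with hN
  -- aeval of X - C c
  have hXC : ∀ c : ℂ, aeval T (X - C c) = T - c • 1 := by
    intro c
    simp [map_sub, aeval_X, aeval_C, Algebra.algebraMap_eq_smul_one]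
  -- degree is positive
  have hdeg : 0 < N := by
    by_contra hcon
    push_neg at hcon
    have hN0 : p.natDegree = 0 := by omega
    have hp0 : p = C (p.coeff 0) := Polynomial.eq_C_of_natDegree_eq_zero hN0
    have hc : p.coeff 0 ≠ 0 := by
      intro h0
      apply hp
      rw [hp0, h0, map_zero]
    rw [hp0] at hann
    rw [aeval_C, Algebra.algebraMap_eq_smul_one] at hann
    obtain ⟨z, hz⟩ := exists_ne (0 : H)
    have : (p.coeff 0 • (1 : H →L[ℂ] H)) z = 0 := by rw [hann]; rfl
    simp only [ContinuousLinearMap.smul_apply, ContinuousLinearMap.one_apply] at this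
    rcases smul_eq_zero.mp this with h | h
    · exact hc h
    · exact hz h
  have hsplits : Splits p := IsAlgClosed.splits p
  set Λ := p.roots.toFinset with hΛ
  have hcard : Multiset.card p.roots = N := (Polynomial.splits_iff_card_roots.mp hsplits)
  have hΛne : Λ.Nonempty := by
    rw [hΛ, Multiset.toFinset_nonempty]
    intro h0
    rw [h0] at hcard
    simp at hcard
    omega
  set r := ∏ lam ∈ Λ, (X - C lam) with hr
  -- the multiset product of roots divides r ^ N
  have hM : (p.roots.map fun a => X - C a).prod ∣ r ^ N := by
    rw [Finset.prod_multiset_map_count, hr, ← Finset.prod_pow]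
    refine Finset.prod_dvd_prod_of_dvd _ _ fun lam _ => pow_dvd_pow _ ?_
    calc Multiset.count lam p.roots ≤ Multiset.card p.roots := Multiset.count_le_card _ _
      _ = N := hcard
  obtain ⟨q, hq⟩ := hM
  have hplead : p.leadingCoeff ≠ 0 := leadingCoeff_ne_zero.mpr hp
  have hpfac : p = C p.leadingCoeff * (p.roots.map fun a => X - C a).prod :=
    hsplits.eq_prod_roots
  have haevalM : (aeval T) ((p.roots.map fun a => X - C a).prod) = 0 := by
    have hMC : (p.roots.map fun a => X - C a).prod = C (p.leadingCoeff)⁻¹ * p := by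
      apply mul_left_cancel₀ (show (C p.leadingCoeff : Polynomial ℂ) ≠ 0 by
        simpa using hplead)
      rw [← mul_assoc, ← C_mul, mul_inv_cancel₀ hplead, C_1, one_mul]
      exact hpfac.symm
    rw [hMC, map_mul, hann, mul_zero]
  have hrN : (aeval T) (r ^ N) = 0 := by rw [hq, map_mul, haevalM, zero_mul]
  -- kernel collapse
  have claim : ∀ (s : Finset ℂ) (x : H),
      (aeval T (∏ lam ∈ s, (X - C lam) ^ N)) x = 0 →
      (aeval T (∏ lam ∈ s, (X - C lam))) x = 0 := by
    intro s
    induction s using Finset.induction_on with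
    | empty => intro x hx; simpa using hx
    | @insert lam0 s' hnot ih =>
      intro x hx
      rw [Finset.prod_insert hnot, map_mul, ContinuousLinearMap.mul_apply, map_pow, hXC] at hx
      have hy : (T - lam0 • 1) ((aeval T) (∏ lam ∈ s', (X - C lam) ^ N) x) = 0 :=
        Stmt17Aux.pow_ker (T - lam0 • 1) (Stmt17Aux.shift_hypo T hhypo lam0) N _ hx
      have hgoal : (∏ lam ∈ insert lam0 s', (X - C lam))
          = (∏ lam ∈ s', (X - C lam)) * (X - C lam0) := by
        rw [Finset.prod_insert hnot, mul_comm]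
      rw [hgoal, map_mul, ContinuousLinearMap.mul_apply]
      apply ih
      have h5 : (aeval T) (∏ lam ∈ s', (X - C lam) ^ N) ((aeval T (X - C lam0)) x)
          = (aeval T) (X - C lam0) ((aeval T) (∏ lam ∈ s', (X - C lam) ^ N) x) := by
        rw [← ContinuousLinearMap.mul_apply, ← map_mul, mul_comm, map_mul,
          ContinuousLinearMap.mul_apply]
      rw [h5, hXC]
      exact hy
  have hr0 : (aeval T) r = 0 := by
    ext x
    have hx : (aeval T) (∏ lam ∈ Λ, (X - C lam) ^ N) x = 0 := by
      rw [Finset.prod_pow, ← hr, hrN]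
      rfl
    have := claim Λ x hx
    rw [← hr] at this
    simpa using this
  -- Lagrange decomposition
  have hsum : ∑ lam ∈ Λ, Lagrange.basis Λ _root_.id lam = 1 :=
    Lagrange.sum_basis (Set.injOn_id _) hΛne
  have heig : ∀ lam ∈ Λ, ∀ x : H,
      T ((aeval T (Lagrange.basis Λ _root_.id lam)) x)
        = lam • ((aeval T (Lagrange.basis Λ _root_.id lam)) x) := by
    intro lam hlam x
    have hfac : (X - C lam) * Lagrange.basis Λ _root_.id lam
        = C (∏ mu ∈ Λ.erase lam, (lam - mu)⁻¹) * r := by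
      unfold Lagrange.basis Lagrange.basisDivisor
      rw [Finset.prod_mul_distrib, ← map_prod, hr, ← Finset.mul_prod_erase Λ _ hlam]
      simp only [id_eq]
      ring
    have h0 : (aeval T) ((X - C lam) * Lagrange.basis Λ _root_.id lam) x = 0 := by
      rw [hfac, map_mul, hr0, mul_zero]
      rfl
    rw [map_mul, ContinuousLinearMap.mul_apply, hXC] at h0
    simpa [sub_eq_zero, ContinuousLinearMap.sub_apply, ContinuousLinearMap.smul_apply,
      ContinuousLinearMap.one_apply] using h0
  -- finish
  ext x
  have haevalsum : (aeval T) (∑ lam ∈ Λ, Lagrange.basis Λ _root_.id lam) = 1 := by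
    rw [hsum, map_one]
  have hxdecomp : x = ∑ lam ∈ Λ, (aeval T (Lagrange.basis Λ _root_.id lam)) x := by
    conv_lhs => rw [show x = (1 : H →L[ℂ] H) x from rfl, ← haevalsum]
    rw [map_sum]
    rw [ContinuousLinearMap.sum_apply]
  rw [ContinuousLinearMap.mul_apply, ContinuousLinearMap.mul_apply]
  conv_lhs => rw [hxdecomp]
  conv_rhs => rw [hxdecomp]
  rw [map_sum, map_sum, map_sum, map_sum]
  refine Finset.sum_congr rfl fun lam hlam => ?_
  have h1 : T ((aeval T (Lagrange.basis Λ _root_.id lam)) x)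
      = lam • ((aeval T (Lagrange.basis Λ _root_.id lam)) x) := heig lam hlam x
  have h2 := Stmt17Aux.eig_adjoint T hhypo lam _ h1
  rw [h1, h2, map_smul, map_smul, h1, h2, smul_comm]
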